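/- For λ ∈ (0,1), the normalized measures b_n^{-1} μ_n on the binary tree T_n ⊂ T converge weakly to μ_Σ as n → ∞. -/

import Mathlib

open scoped Classical

/-- Height `b(i,j)` at which the rays `i` and `j` branch in the binary real tree with edge
lengths `λ^m` at depth `m`: the sum of `λ^k` over the edges shared by the two rays. -/
noncomputable def branchHt (lam : ℝ) (i j : ℕ → Bool) : ℝ :=
  ∑' k : ℕ, if ∀ m ≤ k, i m = j m then lam ^ k else 0

/-- Total height `L = Σ_m λ^m = 1/(1-λ)` of the tree. -/
noncomputable def treeHt (lam : ℝ) : ℝ := 1 / (1 - lam)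

/-- Height `Σ_{k<n} λ^k = (1-λⁿ)/(1-λ)` of a depth-`n` vertex. -/
noncomputable def vertexHt (lam : ℝ) (n : ℕ) : ℝ := (1 - lam ^ n) / (1 - lam)

/-- The distance in the binary real tree between the point at height `h` on the ray `i`
and the point at height `h'` on the ray `j`. -/
noncomputable def treeDist (lam : ℝ) (i j : ℕ → Bool) (h h' : ℝ) : ℝ :=
  h + h' - 2 * min (min h h') (branchHt lam i j)

/-- The point of `T` at height `h` on the ray `i`; `IsTreeParam` says that the metric space
`T` is (isometric to) the completed binary real tree with edge lengths `λ^m` at depth `m`,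
parametrized by `p`. -/
structure IsTreeParam (lam : ℝ) {T : Type*} [MetricSpace T]
    (p : (ℕ → Bool) → ℝ → T) : Prop where
  dist_eq : ∀ (i j : ℕ → Bool) (h h' : ℝ), h ∈ Set.Icc 0 (treeHt lam) →
    h' ∈ Set.Icc 0 (treeHt lam) → dist (p i h) (p j h') = treeDist lam i j h h'
  surj : ∀ x : T, ∃ (i : ℕ → Bool) (h : ℝ), h ∈ Set.Icc 0 (treeHt lam) ∧ p i h = x

/-- Extension of a finite word `w ∈ {0,1}ⁿ` by an infinite string of `0`s. -/
def extendWord {n : ℕ} (w : Fin n → Bool) : ℕ → Bool :=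
  fun k => if h : k < n then w ⟨k, h⟩ else false

/-- `b_n = μ_n(T_n) = (4λ/(2-λ))((2/λ)ⁿ-1)`. -/
noncomputable def treeMass (lam : ℝ) (n : ℕ) : ℝ :=
  (4 * lam / (2 - lam)) * ((2 / lam) ^ n - 1)

/-- The integral `μ_n(f)` of `f` against the measure `μ_n` on the vertices of `T_n ⊂ T`:
the root has mass `2`, a vertex at depth `1 ≤ m ≤ n-1` has mass `λ^{-(m-1)}+2λ^{-m}`, and
a vertex at depth `n` has mass `λ^{-(n-1)}`. -/
noncomputable def muInt (lam : ℝ) {T : Type*} [MetricSpace T]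
    (p : (ℕ → Bool) → ℝ → T) (n : ℕ) (f : T → ℝ) : ℝ :=
  2 * f (p (fun _ => false) 0) +
    (∑ m ∈ Finset.Icc 1 (n - 1), ∑ w : Fin m → Bool,
      ((lam ^ (m - 1))⁻¹ + 2 * (lam ^ m)⁻¹) * f (p (extendWord w) (vertexHt lam m))) +
    ∑ w : Fin n → Bool, (lam ^ (n - 1))⁻¹ * f (p (extendWord w) (vertexHt lam n))

/-! ### Auxiliary lemmas -/

open MeasureTheory Filter

set_option linter.unusedSectionVars false

section branch
variable {lam : ℝ} (hlam : lam ∈ Set.Ioo (0:ℝ) 1)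
include hlam

lemma branch_term_nonneg (i j : ℕ → Bool) (k : ℕ) :
    0 ≤ if ∀ m ≤ k, i m = j m then lam ^ k else 0 := by
  have h0 : (0:ℝ) ≤ lam := hlam.1.le
  split
  · exact pow_nonneg h0 k
  · exact le_refl 0

lemma branch_summable (i j : ℕ → Bool) :
    Summable (fun k : ℕ => if ∀ m ≤ k, i m = j m then lam ^ k else 0) := by
  have h0 : (0:ℝ) ≤ lam := hlam.1.le
  apply Summable.of_nonneg_of_le (branch_term_nonneg hlam i j) (fun k => ?_)
    (summable_geometric_of_lt_one hlam.1.le hlam.2)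
  split
  · exact le_refl _
  · exact pow_nonneg h0 k

lemma branchHt_le (i j : ℕ → Bool) : branchHt lam i j ≤ treeHt lam := by
  have h0 : (0:ℝ) ≤ lam := hlam.1.le
  rw [branchHt, treeHt, one_div, ← tsum_geometric_of_lt_one hlam.1.le hlam.2]
  apply Summable.tsum_le_tsum (fun k => ?_) (branch_summable hlam i j)
    (summable_geometric_of_lt_one hlam.1.le hlam.2)
  split
  · exact le_refl _
  · exact pow_nonneg h0 k

lemma branchHt_self (i : ℕ → Bool) : branchHt lam i i = treeHt lam := by
  rw [branchHt, treeHt, one_div, ← tsum_geometric_of_lt_one hlam.1.le hlam.2]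
  congr 1; ext k; simp

lemma vertexHt_le_branchHt {n : ℕ} {i j : ℕ → Bool} (hij : ∀ m < n, i m = j m) :
    vertexHt lam n ≤ branchHt lam i j := by
  have h1 : (0:ℝ) < 1 - lam := by linarith [hlam.2]
  have h2 : lam - 1 ≠ 0 := by intro h; linarith [hlam.2]
  have : vertexHt lam n = ∑ k ∈ Finset.range n,
      (if ∀ m ≤ k, i m = j m then lam ^ k else 0) := by
    have hc : ∀ k ∈ Finset.range n, (if ∀ m ≤ k, i m = j m then lam ^ k else 0) = lam ^ k := by
      intro k hk
      rw [if_pos fun m hm => hij m (lt_of_le_of_lt hm (Finset.mem_range.1 hk))]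
    rw [Finset.sum_congr rfl hc, geom_sum_eq (by linarith [hlam.2] : lam ≠ 1), vertexHt]
    field_simp [h2]
    ring
  rw [this, branchHt]
  exact Summable.sum_le_tsum _ (fun k _ => branch_term_nonneg hlam i j k) (branch_summable hlam i j)

lemma treeHt_sub_branchHt_le {n : ℕ} {i j : ℕ → Bool} (hij : ∀ m < n, i m = j m) :
    treeHt lam - branchHt lam i j ≤ lam ^ n / (1 - lam) := by
  have h0 : (0:ℝ) ≤ lam := hlam.1.le
  have h1 : (0:ℝ) < 1 - lam := by linarith [hlam.2]
  have hs := branch_summable hlam i j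
  have hg := summable_geometric_of_lt_one hlam.1.le hlam.2 (r := lam)
  rw [treeHt, one_div, ← tsum_geometric_of_lt_one hlam.1.le hlam.2, branchHt,
    ← Summable.tsum_sub hg hs]
  have hkey : ∀ k : ℕ, lam ^ k - (if ∀ m ≤ k, i m = j m then lam ^ k else 0)
      ≤ (if k < n then 0 else lam ^ k) := by
    intro k
    split_ifs with ha hb hb
    · simp
    · simp [pow_nonneg h0]
    · exact absurd (fun m hm => hij m (lt_of_le_of_lt hm hb)) ha
    · simp
  have hsum2 : Summable (fun k : ℕ => if k < n then (0:ℝ) else lam ^ k) := by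
    apply Summable.of_nonneg_of_le (fun k => ?_) (fun k => ?_) hg
    · split
      · exact le_refl 0
      · exact pow_nonneg h0 k
    · split
      · exact pow_nonneg h0 k
      · exact le_refl _
  calc ∑' k : ℕ, (lam ^ k - (if ∀ m ≤ k, i m = j m then lam ^ k else 0))
      ≤ ∑' k : ℕ, (if k < n then (0:ℝ) else lam ^ k) :=
        Summable.tsum_le_tsum hkey (hg.sub hs) hsum2
    _ = lam ^ n / (1 - lam) := by
        rw [← Summable.sum_add_tsum_nat_add n hsum2]
        have hc1 : ∀ k ∈ Finset.range n, (if k < n then (0:ℝ) else lam ^ k) = 0 := by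
          intro k hk; rw [if_pos (Finset.mem_range.1 hk)]
        rw [Finset.sum_congr rfl hc1]
        have hc2 : ∀ k : ℕ, (if k + n < n then (0:ℝ) else lam ^ (k + n)) = lam ^ n * lam ^ k := by
          intro k
          rw [if_neg (by omega), pow_add, mul_comm]
        simp only [Finset.sum_const_zero, zero_add]
        rw [tsum_congr hc2, tsum_mul_left, tsum_geometric_of_lt_one hlam.1.le hlam.2,
          div_eq_mul_inv]
end branch

section dist
variable {lam : ℝ} (hlam : lam ∈ Set.Ioo (0:ℝ) 1) {T : Type*} [MetricSpace T]
  {p : (ℕ → Bool) → ℝ → T} (hp : IsTreeParam lam p)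
include hlam

lemma one_sub_pos : (0:ℝ) < 1 - lam := by linarith [hlam.2]

lemma treeHt_pos : 0 < treeHt lam := by
  have := one_sub_pos hlam; rw [treeHt]; positivity

lemma vertexHt_mem (n : ℕ) : vertexHt lam n ∈ Set.Icc 0 (treeHt lam) := by
  have h1 := one_sub_pos hlam
  have h2 : lam ^ n ≤ 1 := pow_le_one₀ hlam.1.le hlam.2.le
  have h3 : (0:ℝ) < lam ^ n := pow_pos hlam.1 n
  constructor
  · rw [vertexHt]; exact div_nonneg (by linarith) h1.le
  · rw [vertexHt, treeHt]
    exact (div_le_div_iff_of_pos_right h1).2 (by linarith)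

lemma treeHt_mem : treeHt lam ∈ Set.Icc 0 (treeHt lam) :=
  ⟨(treeHt_pos hlam).le, le_refl _⟩

lemma tendsto_vertexHt' : Filter.Tendsto (fun n => vertexHt lam n) Filter.atTop (nhds (treeHt lam)) := by
  have h1 := one_sub_pos hlam
  have : Filter.Tendsto (fun n : ℕ => lam ^ n) Filter.atTop (nhds 0) :=
    tendsto_pow_atTop_nhds_zero_of_lt_one hlam.1.le hlam.2
  have := ((tendsto_const_nhds (x := (1:ℝ))).sub this).div_const (1 - lam)
  simpa [vertexHt, treeHt] using this

include hp

lemma dist_p_le {i j : ℕ → Bool} {h h' : ℝ} (hh : h ∈ Set.Icc 0 (treeHt lam))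
    (hh' : h' ∈ Set.Icc 0 (treeHt lam)) :
    dist (p i h) (p j h') ≤ |h - h'| + 2 * (treeHt lam - branchHt lam i j) := by
  rw [hp.dist_eq i j h h' hh hh', treeDist]
  have hB := branchHt_le hlam i j
  have habs : h + h' - 2 * min h h' = |h - h'| := by
    rcases le_total h h' with hc | hc
    · rw [min_eq_left hc, abs_of_nonpos (by linarith)]; ring
    · rw [min_eq_right hc, abs_of_nonneg (by linarith)]; ring
  rcases le_total (branchHt lam i j) (min h h') with hc | hc
  · rw [min_eq_right hc]
    have : min h h' ≤ treeHt lam := le_trans (min_le_left _ _) hh.2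
    linarith
  · rw [min_eq_left hc]; linarith

lemma p_eq_of_agree {n : ℕ} {i j : ℕ → Bool} (hij : ∀ m < n, i m = j m) :
    p i (vertexHt lam n) = p j (vertexHt lam n) := by
  rw [← dist_eq_zero, hp.dist_eq i j _ _ (vertexHt_mem hlam n) (vertexHt_mem hlam n), treeDist]
  rw [min_self, min_eq_left (vertexHt_le_branchHt hlam hij)]
  ring

lemma tendsto_p_vertexHt (i : ℕ → Bool) :
    Filter.Tendsto (fun n => p i (vertexHt lam n)) Filter.atTop (nhds (p i (treeHt lam))) := by
  rw [tendsto_iff_dist_tendsto_zero]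
  have hb : ∀ n, dist (p i (vertexHt lam n)) (p i (treeHt lam)) ≤ |vertexHt lam n - treeHt lam| := by
    intro n
    have := dist_p_le hlam hp (i := i) (j := i) (vertexHt_mem hlam n) (treeHt_mem hlam)
    rw [branchHt_self hlam] at this
    simpa using this
  apply squeeze_zero (fun n => dist_nonneg) hb
  have := (tendsto_vertexHt' hlam).sub (tendsto_const_nhds (x := treeHt lam))
  simp only [sub_self] at this
  simpa using this.abs

lemma continuousOn_param :
    ContinuousOn (fun z : (ℕ → Bool) × ℝ => p z.1 z.2) (Set.univ ×ˢ Set.Icc 0 (treeHt lam)) := by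
  have h1 := one_sub_pos hlam
  intro z hz
  unfold ContinuousWithinAt
  rw [Metric.tendsto_nhds]
  intro ε hε
  obtain ⟨N, hN⟩ : ∃ N : ℕ, 2 * (lam ^ N / (1 - lam)) < ε / 2 := by
    have : Filter.Tendsto (fun n : ℕ => 2 * (lam ^ n / (1 - lam))) Filter.atTop (nhds 0) := by
      have := tendsto_pow_atTop_nhds_zero_of_lt_one hlam.1.le hlam.2
      simpa using (this.div_const (1 - lam)).const_mul 2
    exact ((this.eventually (eventually_lt_nhds (by positivity : (0:ℝ) < ε/2))).exists)
  have hopen : IsOpen ({j : ℕ → Bool | ∀ k < N, j k = z.1 k} ×ˢ Metric.ball z.2 (ε/4)) := by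
    apply IsOpen.prod _ Metric.isOpen_ball
    have : {j : ℕ → Bool | ∀ k < N, j k = z.1 k} = ⋂ k ∈ Finset.range N, {j : ℕ → Bool | j k = z.1 k} := by
      ext j; simp [Finset.mem_range]
    rw [this]
    apply isOpen_biInter_finset
    intro k _
    have : {j : ℕ → Bool | j k = z.1 k} = (fun j : ℕ → Bool => j k) ⁻¹' {z.1 k} := rfl
    rw [this]
    exact (isOpen_discrete ({z.1 k} : Set Bool)).preimage (continuous_apply k)
  have hmem : z ∈ ({j : ℕ → Bool | ∀ k < N, j k = z.1 k} ×ˢ Metric.ball z.2 (ε/4)) :=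
    ⟨fun k _ => rfl, Metric.mem_ball_self (by positivity)⟩
  filter_upwards [nhdsWithin_le_nhds (hopen.mem_nhds hmem), self_mem_nhdsWithin] with y hy hys
  have hd := dist_p_le hlam hp (i := y.1) (j := z.1) (h := y.2) (h' := z.2) hys.2 hz.2
  have hB := treeHt_sub_branchHt_le hlam (n := N) (i := y.1) (j := z.1) hy.1
  have habs : |y.2 - z.2| < ε / 4 := by
    have := hy.2
    rwa [Metric.mem_ball, Real.dist_eq] at this
  calc dist (p y.1 y.2) (p z.1 z.2) ≤ |y.2 - z.2| + 2 * (treeHt lam - branchHt lam y.1 z.1) := hd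
    _ < ε / 4 + ε / 2 := by linarith
    _ < ε := by linarith

lemma compactSpace_of_param : CompactSpace T := by
  constructor
  have : (Set.univ : Set T) =
      (fun z : (ℕ → Bool) × ℝ => p z.1 z.2) '' (Set.univ ×ˢ Set.Icc 0 (treeHt lam)) := by
    ext x
    simp only [Set.mem_univ, true_iff, Set.mem_image]
    obtain ⟨i, h, hh, hx⟩ := hp.surj x
    exact ⟨(i, h), ⟨trivial, hh⟩, hx⟩
  rw [this]
  exact (isCompact_univ.prod isCompact_Icc).image_of_continuousOn (continuousOn_param hlam hp)

lemma continuous_p_slice {h : ℝ} (hh : h ∈ Set.Icc 0 (treeHt lam)) :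
    Continuous (fun i : ℕ → Bool => p i h) := by
  rw [← continuousOn_univ]
  have : (fun i : ℕ → Bool => p i h) =
      (fun z : (ℕ → Bool) × ℝ => p z.1 z.2) ∘ (fun i => (i, h)) := rfl
  rw [this]
  exact (continuousOn_param hlam hp).comp
    (Continuous.continuousOn (by fun_prop)) (fun i _ => ⟨trivial, hh⟩)
end dist

section meas
variable {lam : ℝ} (hlam : lam ∈ Set.Ioo (0:ℝ) 1) {T : Type*} [MetricSpace T]
  [MeasurableSpace T] [BorelSpace T] {p : (ℕ → Bool) → ℝ → T} (hp : IsTreeParam lam p)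

/-- cylinder set -/
def cyl {m : ℕ} (w : Fin m → Bool) : Set (ℕ → Bool) :=
  {i : ℕ → Bool | ∀ k : Fin m, i k = w k}

lemma measurableSet_cyl {m : ℕ} (w : Fin m → Bool) : MeasurableSet (cyl w) := by
  have : cyl w = ⋂ k : Fin m, (fun i : ℕ → Bool => i k) ⁻¹' {w k} := by
    ext i; simp [cyl]
  rw [this]
  exact MeasurableSet.iInter fun k => (measurable_pi_apply (k : ℕ)) (measurableSet_singleton _)

lemma cyl_measure {μC : Measure (ℕ → Bool)}
    (hcyl : ∀ w : List Bool,
      μC {i : ℕ → Bool | ∀ m < w.length, i m = w.getD m false} = (2 : ENNReal)⁻¹ ^ w.length)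
    {m : ℕ} (w : Fin m → Bool) : μC (cyl w) = (2 : ENNReal)⁻¹ ^ m := by
  have h := hcyl (List.ofFn w)
  rw [List.length_ofFn] at h
  rw [← h]
  congr 1
  ext i
  simp only [cyl, Set.mem_setOf_eq]
  constructor
  · intro hi k hk
    rw [List.getD_eq_getElem _ _ (by simpa using hk), List.getElem_ofFn]
    exact hi ⟨k, hk⟩
  · intro hi k
    have := hi k k.2
    rwa [List.getD_eq_getElem _ _ (by simpa using k.2), List.getElem_ofFn] at this

include hlam hp

lemma integral_slice (μC : Measure (ℕ → Bool)) [IsProbabilityMeasure μC]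
    (hcyl : ∀ w : List Bool,
      μC {i : ℕ → Bool | ∀ m < w.length, i m = w.getD m false} = (2 : ENNReal)⁻¹ ^ w.length)
    (f : T → ℝ) (m : ℕ) :
    ∫ i, f (p i (vertexHt lam m)) ∂μC =
      ((2:ℝ)⁻¹) ^ m * ∑ w : Fin m → Bool, f (p (extendWord w) (vertexHt lam m)) := by
  have hpt : ∀ i : ℕ → Bool, f (p i (vertexHt lam m)) =
      ∑ w : Fin m → Bool, Set.indicator (cyl w)
        (fun _ => f (p (extendWord w) (vertexHt lam m))) i := by
    intro i
    rw [Finset.sum_eq_single (fun k : Fin m => i k)]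
    · rw [Set.indicator_of_mem (by intro k; rfl)]
      congr 1
      apply p_eq_of_agree hlam hp
      intro k hk
      simp [extendWord, hk]
    · intro w _ hw
      apply Set.indicator_of_notMem
      intro hmem
      exact hw (funext fun k => (hmem k).symm)
    · intro h; exact absurd (Finset.mem_univ _) h
  calc ∫ i, f (p i (vertexHt lam m)) ∂μC
      = ∫ i, ∑ w : Fin m → Bool, Set.indicator (cyl w)
          (fun _ => f (p (extendWord w) (vertexHt lam m))) i ∂μC := by
        exact integral_congr_ae (Filter.Eventually.of_forall hpt)
    _ = ∑ w : Fin m → Bool, ∫ i, Set.indicator (cyl w)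
          (fun _ => f (p (extendWord w) (vertexHt lam m))) i ∂μC := by
        apply integral_finset_sum
        intro w _
        apply (integrable_indicator_iff (measurableSet_cyl w)).2
        exact integrableOn_const (measure_ne_top μC _)
    _ = ((2:ℝ)⁻¹) ^ m * ∑ w : Fin m → Bool, f (p (extendWord w) (vertexHt lam m)) := by
        rw [Finset.mul_sum]
        apply Finset.sum_congr rfl
        intro w _
        rw [integral_indicator_const _ (measurableSet_cyl w), measureReal_def, cyl_measure hcyl w]
        simp [ENNReal.toReal_pow, smul_eq_mul]

lemma tendsto_avg (μC : Measure (ℕ → Bool)) [IsProbabilityMeasure μC]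
    (f : T → ℝ) (hf : Continuous f) :
    Tendsto (fun m => ∫ i, f (p i (vertexHt lam m)) ∂μC) atTop
      (nhds (∫ i, f (p i (treeHt lam)) ∂μC)) := by
  have hcomp : CompactSpace T := compactSpace_of_param hlam hp
  obtain ⟨C, hC0⟩ := (isCompact_range hf.abs).bddAbove
  have hC : ∀ x : T, |f x| ≤ C := fun x => hC0 (Set.mem_range_self x)
  apply tendsto_integral_of_dominated_convergence (fun _ => C)
  · intro m
    exact ((hf.comp (continuous_p_slice hlam hp (vertexHt_mem hlam m))).aestronglyMeasurable)
  · exact integrable_const C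
  · intro m
    exact Eventually.of_forall fun i => by
      rw [Real.norm_eq_abs]; exact hC _
  · exact Eventually.of_forall fun i =>
      (hf.tendsto _).comp (tendsto_p_vertexHt hlam hp i)
end meas

lemma toeplitz_geom {r : ℝ} (hr : 1 < r) {u : ℕ → ℝ} (hu0 : ∀ m, 0 ≤ u m)
    (hu : Tendsto u atTop (nhds 0)) :
    Tendsto (fun n => r⁻¹ ^ n * ∑ m ∈ Finset.range (n+1), r ^ m * u m) atTop (nhds 0) := by
  have hr0 : (0:ℝ) < r := lt_trans one_pos hr
  have hr1 : (0:ℝ) < r - 1 := by linarith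
  rw [NormedAddCommGroup.tendsto_nhds_zero]
  intro ε hε
  set ε' : ℝ := ε * (r - 1) / (2 * r) with hε'def
  have hε' : 0 < ε' := by positivity
  obtain ⟨M, hM⟩ : ∃ M : ℕ, ∀ m ≥ M, u m < ε' :=
    eventually_atTop.1 (hu.eventually (eventually_lt_nhds hε'))
  set H : ℝ := ∑ m ∈ Finset.range M, r ^ m * u m with hHdef
  have hVnonneg : ∀ n, 0 ≤ r⁻¹ ^ n * ∑ m ∈ Finset.range (n+1), r ^ m * u m := by
    intro n
    apply mul_nonneg (by positivity)
    exact Finset.sum_nonneg fun m _ => mul_nonneg (by positivity) (hu0 m)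
  have hbound : ∀ n ≥ M, r⁻¹ ^ n * ∑ m ∈ Finset.range (n+1), r ^ m * u m
      ≤ r⁻¹ ^ n * H + ε / 2 := by
    intro n hn
    have hsplit : ∑ m ∈ Finset.range (n+1), r ^ m * u m
        = H + ∑ m ∈ Finset.Ico M (n+1), r ^ m * u m := by
      rw [hHdef, Finset.sum_range_add_sum_Ico _ (by omega)]
    have htail : ∑ m ∈ Finset.Ico M (n+1), r ^ m * u m ≤ ε' * (r ^ (n+1) / (r - 1)) := by
      calc ∑ m ∈ Finset.Ico M (n+1), r ^ m * u m
          ≤ ∑ m ∈ Finset.Ico M (n+1), r ^ m * ε' := by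
            apply Finset.sum_le_sum
            intro m hm
            exact mul_le_mul_of_nonneg_left (hM m (Finset.mem_Ico.1 hm).1).le (by positivity)
        _ ≤ ∑ m ∈ Finset.range (n+1), r ^ m * ε' := by
            apply Finset.sum_le_sum_of_subset_of_nonneg
            · intro m hm
              simp only [Finset.mem_range]
              exact (Finset.mem_Ico.1 hm).2
            · intro m _ _; positivity
        _ = (∑ m ∈ Finset.range (n+1), r ^ m) * ε' := by rw [Finset.sum_mul]
        _ ≤ (r ^ (n+1) / (r - 1)) * ε' := by
            apply mul_le_mul_of_nonneg_right _ hε'.le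
            rw [geom_sum_eq (ne_of_gt hr)]
            gcongr
            linarith
        _ = ε' * (r ^ (n+1) / (r - 1)) := mul_comm _ _
    calc r⁻¹ ^ n * ∑ m ∈ Finset.range (n+1), r ^ m * u m
        = r⁻¹ ^ n * H + r⁻¹ ^ n * ∑ m ∈ Finset.Ico M (n+1), r ^ m * u m := by
          rw [hsplit]; ring
      _ ≤ r⁻¹ ^ n * H + r⁻¹ ^ n * (ε' * (r ^ (n+1) / (r - 1))) := by
          have := mul_le_mul_of_nonneg_left htail (by positivity : (0:ℝ) ≤ r⁻¹ ^ n)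
          linarith
      _ = r⁻¹ ^ n * H + ε / 2 := by
          congr 1
          have hrn : r ^ n ≠ 0 := by positivity
          rw [inv_pow]
          field_simp [hε'def]
          rw [hε'def]; field_simp; ring
  have hlim : Tendsto (fun n => r⁻¹ ^ n * H + ε / 2) atTop (nhds (ε / 2)) := by
    have : Tendsto (fun n : ℕ => r⁻¹ ^ n) atTop (nhds 0) := by
      apply tendsto_pow_atTop_nhds_zero_of_lt_one (by positivity)
      rw [inv_lt_one_iff₀]; right; exact hr
    simpa using (this.mul_const H).add_const (ε / 2)
  have hev : ∀ᶠ n in atTop, r⁻¹ ^ n * H + ε / 2 < ε :=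
    hlim.eventually (eventually_lt_nhds (by linarith))
  filter_upwards [hev, eventually_ge_atTop M] with n h1 h2
  rw [Real.norm_eq_abs, abs_of_nonneg (hVnonneg n)]
  exact lt_of_le_of_lt (hbound n h2) h1

lemma weight_sum {lam : ℝ} (hlam : lam ∈ Set.Ioo (0:ℝ) 1) :
    ∀ n : ℕ, 1 ≤ n →
    2 + (∑ m ∈ Finset.Icc 1 (n-1), (2:ℝ)^m * ((lam ^ (m-1))⁻¹ + 2*(lam^m)⁻¹))
      + 2^n * (lam^(n-1))⁻¹ = treeMass lam n := by
  have hl0 : lam ≠ 0 := ne_of_gt hlam.1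
  have hl2 : (2:ℝ) - lam ≠ 0 := by intro h; nlinarith [hlam.2]
  intro n hn
  induction n, hn using Nat.le_induction with
  | base =>
    rw [show (1:ℕ) - 1 = 0 from rfl, Finset.Icc_eq_empty (by omega), Finset.sum_empty, treeMass]
    field_simp
    ring
  | succ n hn ih =>
    obtain ⟨k, rfl⟩ : ∃ k, n = k + 1 := ⟨n - 1, by omega⟩
    simp only [Nat.add_sub_cancel] at ih ⊢
    rw [Finset.sum_Icc_succ_top (by omega)]
    simp only [Nat.add_sub_cancel]
    have hpk : lam ^ k ≠ 0 := pow_ne_zero _ hl0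
    have hpk1 : lam ^ (k+1) ≠ 0 := pow_ne_zero _ hl0
    have hmass : treeMass lam (k+1+1) - treeMass lam (k+1) = 2^(k+3) * (lam^(k+1))⁻¹ := by
      simp only [treeMass]
      rw [div_pow, div_pow]
      field_simp
      ring
    have hkey : (2:ℝ)^(k+1) * ((lam ^ k)⁻¹ + 2*(lam^(k+1))⁻¹) + 2^(k+1+1) * (lam^(k+1))⁻¹
        - 2^(k+1) * (lam^k)⁻¹ = 2^(k+3) * (lam^(k+1))⁻¹ := by
      field_simp
      ring
    linarith [ih]

lemma muInt_eq (lam : ℝ) {T : Type*} [MetricSpace T] (p : (ℕ → Bool) → ℝ → T)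
    (n : ℕ) (f : T → ℝ) :
    muInt lam p n f =
      2 * (∑ w : Fin 0 → Bool, f (p (extendWord w) (vertexHt lam 0))) +
      (∑ m ∈ Finset.Icc 1 (n-1), ((lam ^ (m-1))⁻¹ + 2*(lam^m)⁻¹) *
        ∑ w : Fin m → Bool, f (p (extendWord w) (vertexHt lam m))) +
      (lam^(n-1))⁻¹ * ∑ w : Fin n → Bool, f (p (extendWord w) (vertexHt lam n)) := by
  have hG0 : (∑ w : Fin 0 → Bool, f (p (extendWord w) (vertexHt lam 0)))
      = f (p (fun _ => false) 0) := by
    rw [Fintype.sum_unique]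
    have h1 : ∀ w : Fin 0 → Bool, extendWord w = fun _ => false := fun w =>
      funext fun k => by simp [extendWord]
    have h2 : vertexHt lam 0 = 0 := by simp [vertexHt]
    rw [h1, h2]
  rw [muInt, hG0]
  congr 1
  · congr 1
    apply Finset.sum_congr rfl
    intro m _
    rw [Finset.mul_sum]
  · rw [Finset.mul_sum]

/-- For `λ ∈ (0,1)`, the normalized measures `b_n⁻¹ μ_n` on the binary trees `T_n ⊂ T`
converge weakly (tested against continuous functions on `T`) to `μ_Σ`, the image on the
boundary `Σ ⊂ T` of the fair coin-flipping measure. -/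
theorem stmt_11 (lam : ℝ) (hlam : lam ∈ Set.Ioo (0 : ℝ) 1)
    {T : Type*} [MetricSpace T] [MeasurableSpace T] [BorelSpace T]
    (p : (ℕ → Bool) → ℝ → T) (hp : IsTreeParam lam p)
    (μC : MeasureTheory.Measure (ℕ → Bool)) (hμC : MeasureTheory.IsProbabilityMeasure μC)
    (hcyl : ∀ w : List Bool,
      μC {i : ℕ → Bool | ∀ m < w.length, i m = w.getD m false} = (2 : ENNReal)⁻¹ ^ w.length) :
    ∀ f : T → ℝ, Continuous f →
      Filter.Tendsto (fun n : ℕ => (treeMass lam n)⁻¹ * muInt lam p n f) Filter.atTop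
        (nhds (∫ x, f x ∂(μC.map (fun i : ℕ → Bool => p i (treeHt lam))))) := by
  haveI := hμC
  intro f hf
  have hl0 : lam ≠ 0 := ne_of_gt hlam.1
  have hlpos : (0:ℝ) < lam := hlam.1
  have hl2 : (0:ℝ) < 2 - lam := by nlinarith [hlam.2]
  set G : ℕ → ℝ := fun m => ∑ w : Fin m → Bool, f (p (extendWord w) (vertexHt lam m)) with hGdef
  set l : ℝ := ∫ i, f (p i (treeHt lam)) ∂μC with hldef
  -- identify the limit
  have hmap : ∫ x, f x ∂(μC.map (fun i : ℕ → Bool => p i (treeHt lam))) = l := by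
    rw [hldef]
    exact integral_map
      ((continuous_p_slice hlam hp (treeHt_mem hlam)).measurable.aemeasurable)
      hf.aestronglyMeasurable
  rw [hmap]
  -- convergence of the slice averages
  have havg : Tendsto (fun m => (2:ℝ)⁻¹ ^ m * G m) atTop (nhds l) := by
    have heq : ∀ m, ∫ i, f (p i (vertexHt lam m)) ∂μC = (2:ℝ)⁻¹ ^ m * G m := fun m =>
      integral_slice hlam hp μC hcyl f m
    have := tendsto_avg hlam hp μC f hf
    rwa [tendsto_congr heq] at this
  set u : ℕ → ℝ := fun m => |(2:ℝ)⁻¹ ^ m * G m - l| with hudef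
  have hu0 : ∀ m, 0 ≤ u m := fun m => abs_nonneg _
  have hu : Tendsto u atTop (nhds 0) := by
    have := (havg.sub_const l).abs
    simpa [hudef] using this
  set r : ℝ := 2 / lam with hrdef
  have hr : 1 < r := by
    rw [hrdef, lt_div_iff₀ hlpos]; linarith [hlam.2]
  have hrpos : (0:ℝ) < r := lt_trans one_pos hr
  have huabs : ∀ m, |G m - 2^m * l| = 2^m * u m := by
    intro m
    have h2m : (2:ℝ)^m * (2⁻¹)^m = 1 := by rw [← mul_pow]; norm_num
    have hgm : G m - 2^m * l = (2:ℝ)^m * ((2⁻¹:ℝ)^m * G m - l) := by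
      rw [mul_sub, ← mul_assoc, h2m, one_mul]
    rw [hgm, abs_mul, abs_of_nonneg (by positivity : (0:ℝ) ≤ (2:ℝ)^m), hudef]
  -- the main estimate
  have hbound : ∀ n : ℕ, 1 ≤ n →
      ‖(treeMass lam n)⁻¹ * muInt lam p n f - l‖ ≤
        (3/(2*lam)) * (r⁻¹ ^ n * ∑ m ∈ Finset.range (n+1), r ^ m * u m) := by
    intro n hn
    have hW := weight_sum hlam n hn
    have hM := muInt_eq lam p n f
    set cm : ℕ → ℝ := fun m => (lam ^ (m-1))⁻¹ + 2*(lam^m)⁻¹ with hcmdef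
    have hcm_nonneg : ∀ m, 0 ≤ cm m := by
      intro m; rw [hcmdef]
      have := pow_pos hlpos (m-1); have := pow_pos hlpos m
      positivity
    have hsum : ∑ m ∈ Finset.Icc 1 (n-1), cm m * (G m - 2^m * l)
        = (∑ m ∈ Finset.Icc 1 (n-1), cm m * G m)
          - (∑ m ∈ Finset.Icc 1 (n-1), (2:ℝ)^m * cm m) * l := by
      rw [Finset.sum_mul, ← Finset.sum_sub_distrib]
      exact Finset.sum_congr rfl fun m _ => by ring
    have hE : muInt lam p n f - l * treeMass lam n
        = 2*(G 0 - l) + (∑ m ∈ Finset.Icc 1 (n-1), cm m * (G m - 2^m * l))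
          + (lam^(n-1))⁻¹ * (G n - 2^n * l) := by
      rw [hM, ← hW, hsum]
      ring
    -- bound |E|
    have hEabs : |muInt lam p n f - l * treeMass lam n|
        ≤ 3 * ∑ m ∈ Finset.range (n+1), r ^ m * u m := by
      rw [hE]
      have step1 : |2*(G 0 - l) + (∑ m ∈ Finset.Icc 1 (n-1), cm m * (G m - 2^m * l))
          + (lam^(n-1))⁻¹ * (G n - 2^n * l)|
          ≤ 2 * u 0 + (∑ m ∈ Finset.Icc 1 (n-1), cm m * (2^m * u m))
            + (lam^(n-1))⁻¹ * (2^n * u n) := by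
        have h0 : |2*(G 0 - l)| = 2 * u 0 := by
          rw [abs_mul, abs_of_nonneg (by norm_num : (0:ℝ) ≤ 2)]
          have := huabs 0
          simpa using this
        have hleaf : |(lam^(n-1))⁻¹ * (G n - 2^n * l)| = (lam^(n-1))⁻¹ * (2^n * u n) := by
          rw [abs_mul, abs_of_nonneg (by positivity : (0:ℝ) ≤ (lam^(n-1))⁻¹), huabs n]
        have hmid : |∑ m ∈ Finset.Icc 1 (n-1), cm m * (G m - 2^m * l)|
            ≤ ∑ m ∈ Finset.Icc 1 (n-1), cm m * (2^m * u m) := by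
          apply (Finset.abs_sum_le_sum_abs _ _).trans
          apply Finset.sum_le_sum
          intro m _
          rw [abs_mul, abs_of_nonneg (hcm_nonneg m), huabs m]
        calc |2*(G 0 - l) + (∑ m ∈ Finset.Icc 1 (n-1), cm m * (G m - 2^m * l))
            + (lam^(n-1))⁻¹ * (G n - 2^n * l)|
            ≤ |2*(G 0 - l) + (∑ m ∈ Finset.Icc 1 (n-1), cm m * (G m - 2^m * l))|
              + |(lam^(n-1))⁻¹ * (G n - 2^n * l)| := abs_add_le _ _
          _ ≤ |2*(G 0 - l)| + |∑ m ∈ Finset.Icc 1 (n-1), cm m * (G m - 2^m * l)|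
              + |(lam^(n-1))⁻¹ * (G n - 2^n * l)| := by
                have := abs_add_le (2*(G 0 - l)) (∑ m ∈ Finset.Icc 1 (n-1), cm m * (G m - 2^m * l))
                linarith
          _ ≤ 2 * u 0 + (∑ m ∈ Finset.Icc 1 (n-1), cm m * (2^m * u m))
              + (lam^(n-1))⁻¹ * (2^n * u n) := by
                rw [h0, hleaf]; linarith [hmid]
      apply step1.trans
      -- term-wise comparison with 3 * r^m * u m
      have hterm : ∀ m ∈ Finset.Icc 1 (n-1), cm m * (2^m * u m) ≤ 3 * (r^m * u m) := by
        intro m hm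
        obtain ⟨j, rfl⟩ : ∃ j, m = j + 1 := ⟨m - 1, by
          have := (Finset.mem_Icc.1 hm).1; omega⟩
        have hid : cm (j+1) * 2^(j+1) = (lam + 2) * r^(j+1) := by
          rw [hcmdef]; simp only [Nat.add_sub_cancel]
          have hpj : lam ^ j ≠ 0 := pow_ne_zero _ hl0
          have hpj1 : lam ^ (j+1) ≠ 0 := pow_ne_zero _ hl0
          rw [hrdef, div_pow]
          field_simp
          ring
        calc cm (j+1) * (2^(j+1) * u (j+1)) = (cm (j+1) * 2^(j+1)) * u (j+1) := by ring
          _ = ((lam + 2) * r^(j+1)) * u (j+1) := by rw [hid]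
          _ ≤ (3 * r^(j+1)) * u (j+1) := by
              apply mul_le_mul_of_nonneg_right _ (hu0 _)
              apply mul_le_mul_of_nonneg_right _ (by positivity)
              linarith [hlam.2]
          _ = 3 * (r^(j+1) * u (j+1)) := by ring
      have hleafterm : (lam^(n-1))⁻¹ * (2^n * u n) ≤ 3 * (r^n * u n) := by
        obtain ⟨j, rfl⟩ : ∃ j, n = j + 1 := ⟨n - 1, by omega⟩
        simp only [Nat.add_sub_cancel]
        have hid : (lam^j)⁻¹ * (2:ℝ)^(j+1) = lam * r^(j+1) := by
          have hpj : lam ^ j ≠ 0 := pow_ne_zero _ hl0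
          rw [hrdef, div_pow]
          field_simp
          ring
        calc (lam^j)⁻¹ * (2^(j+1) * u (j+1)) = ((lam^j)⁻¹ * 2^(j+1)) * u (j+1) := by ring
          _ = (lam * r^(j+1)) * u (j+1) := by rw [hid]
          _ ≤ (3 * r^(j+1)) * u (j+1) := by
              apply mul_le_mul_of_nonneg_right _ (hu0 _)
              apply mul_le_mul_of_nonneg_right _ (by positivity)
              linarith [hlam.2]
          _ = 3 * (r^(j+1) * u (j+1)) := by ring
      have hroot : 2 * u 0 ≤ 3 * (r^0 * u 0) := by
        simp only [pow_zero, one_mul]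
        linarith [hu0 0]
      -- sum over the disjoint pieces
      have h0notin : (0:ℕ) ∉ insert n (Finset.Icc 1 (n-1)) := by
        simp only [Finset.mem_insert, Finset.mem_Icc]
        omega
      have hnnotin : n ∉ Finset.Icc 1 (n-1) := by
        simp only [Finset.mem_Icc]
        omega
      have hsub : insert 0 (insert n (Finset.Icc 1 (n-1))) ⊆ Finset.range (n+1) := by
        intro m hm
        simp only [Finset.mem_insert, Finset.mem_Icc] at hm
        simp only [Finset.mem_range]
        omega
      have hpiece : r^0 * u 0 + (r^n * u n + ∑ m ∈ Finset.Icc 1 (n-1), r^m * u m)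
          ≤ ∑ m ∈ Finset.range (n+1), r^m * u m := by
        have hins : ∑ m ∈ insert 0 (insert n (Finset.Icc 1 (n-1))), r^m * u m
            = r^0 * u 0 + (r^n * u n + ∑ m ∈ Finset.Icc 1 (n-1), r^m * u m) := by
          rw [Finset.sum_insert h0notin, Finset.sum_insert hnnotin]
        rw [← hins]
        apply Finset.sum_le_sum_of_subset_of_nonneg hsub
        intro m _ _
        exact mul_nonneg (by positivity) (hu0 m)
      have hmid2 : ∑ m ∈ Finset.Icc 1 (n-1), cm m * (2^m * u m)
          ≤ 3 * ∑ m ∈ Finset.Icc 1 (n-1), r^m * u m := by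
        rw [Finset.mul_sum]
        exact Finset.sum_le_sum hterm
      calc 2 * u 0 + (∑ m ∈ Finset.Icc 1 (n-1), cm m * (2^m * u m))
          + (lam^(n-1))⁻¹ * (2^n * u n)
          ≤ 3 * (r^0 * u 0) + 3 * (∑ m ∈ Finset.Icc 1 (n-1), r^m * u m) + 3 * (r^n * u n) := by
            linarith [hroot, hmid2, hleafterm]
        _ = 3 * (r^0 * u 0 + (r^n * u n + ∑ m ∈ Finset.Icc 1 (n-1), r^m * u m)) := by ring
        _ ≤ 3 * ∑ m ∈ Finset.range (n+1), r^m * u m := by linarith [hpiece]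
    -- lower bound for the mass
    have hrn : r ≤ r ^ n := le_self_pow₀ hr.le (by omega)
    have hrnpos : (0:ℝ) < r ^ n := pow_pos hrpos n
    have hlr : lam * r = 2 := by rw [hrdef]; field_simp
    have hb : 2*lam*r^n ≤ treeMass lam n := by
      rw [treeMass, ← hrdef, div_mul_eq_mul_div, le_div_iff₀ hl2]
      nlinarith [mul_le_mul_of_nonneg_left hrn hlpos.le]
    have hbpos : (0:ℝ) < treeMass lam n := lt_of_lt_of_le (by positivity) hb
    have hrepr : (treeMass lam n)⁻¹ * muInt lam p n f - l
        = (muInt lam p n f - l * treeMass lam n) / treeMass lam n := by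
      field_simp
    rw [Real.norm_eq_abs, hrepr, abs_div, abs_of_pos hbpos]
    have hBnn : (0:ℝ) ≤ ∑ m ∈ Finset.range (n+1), r^m * u m :=
      Finset.sum_nonneg fun m _ => mul_nonneg (by positivity) (hu0 m)
    calc |muInt lam p n f - l * treeMass lam n| / treeMass lam n
        ≤ (3 * ∑ m ∈ Finset.range (n+1), r^m * u m) / (2*lam*r^n) :=
          div_le_div₀ (by positivity) hEabs (by positivity) hb
      _ = (3/(2*lam)) * (r⁻¹ ^ n * ∑ m ∈ Finset.range (n+1), r ^ m * u m) := by
          rw [inv_pow]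
          field_simp
          try ring
  -- conclude
  have htop : Tendsto (fun n => (3/(2*lam)) *
      (r⁻¹ ^ n * ∑ m ∈ Finset.range (n+1), r ^ m * u m)) atTop (nhds 0) := by
    have := (toeplitz_geom hr hu0 hu).const_mul (3/(2*lam))
    simpa using this
  have hzero : Tendsto (fun n : ℕ => (treeMass lam n)⁻¹ * muInt lam p n f - l) atTop (nhds 0) := by
    apply squeeze_zero_norm' _ htop
    filter_upwards [eventually_ge_atTop 1] with n hn
    exact hbound n hn
  have := hzero.add_const l
  simpa using this
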